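/- The joint distribution of the largest observed and largest uncensored times satisfies, for 0 ≤ t < x ≤ τ_H: P(M_u(n) ≤ t, M(n) ≤ x) = (∫_t^x F̄*(z) dG(z) + H(t))^n. -/

import Mathlib

open MeasureTheory ProbabilityTheory Filter Set
open scoped ENNReal

noncomputable def stieltjesOf (f : ℝ → ℝ) (hm : Monotone f) (hc : Continuous f) :
    StieltjesFunction ℝ := ⟨f, hm, fun _ => hc.continuousWithinAt⟩

lemma aux_nonneg (G : ℝ → ℝ) (hGm : Monotone G) (hG0 : ∀ x ≤ (0:ℝ), G x = 0) (z : ℝ) :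
    0 ≤ G z := by
  rcases le_or_gt z 0 with h | h
  · rw [hG0 z h]
  · rw [← hG0 0 le_rfl]; exact hGm h.le

lemma aux_le_one (G : ℝ → ℝ) (hGm : Monotone G) (hGtop : Tendsto G atTop (nhds 1)) (z : ℝ) :
    G z ≤ 1 := hGm.ge_of_tendsto hGtop z

lemma aux_tendsto_bot (G : ℝ → ℝ) (hG0 : ∀ x ≤ (0:ℝ), G x = 0) :
    Tendsto G atBot (nhds 0) := by
  apply Tendsto.congr' _ tendsto_const_nhds
  filter_upwards [eventually_le_atBot (0:ℝ)] with z hz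
  exact (hG0 z hz).symm

lemma stieltjes_Iic (G : ℝ → ℝ) (hGm : Monotone G) (hGc : Continuous G)
    (hG0 : ∀ x ≤ (0:ℝ), G x = 0) (z : ℝ) :
    (stieltjesOf G hGm hGc).measure (Iic z) = ENNReal.ofReal (G z) := by
  rw [(stieltjesOf G hGm hGc).measure_Iic (l := 0) (aux_tendsto_bot G hG0) z]
  simp [stieltjesOf]

lemma stieltjes_prob (G : ℝ → ℝ) (hGm : Monotone G) (hGc : Continuous G)
    (hG0 : ∀ x ≤ (0:ℝ), G x = 0) (hGtop : Tendsto G atTop (nhds 1)) :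
    IsProbabilityMeasure (stieltjesOf G hGm hGc).measure := by
  constructor
  rw [(stieltjesOf G hGm hGc).measure_univ (l := 0) (u := 1) (aux_tendsto_bot G hG0) hGtop]
  simp

/-- identification of the law of U with the pushforward of the Stieltjes measure -/
lemma law_eq_map {Ω : Type*} [MeasurableSpace Ω] (P : Measure Ω) [IsProbabilityMeasure P]
    (G : ℝ → ℝ) (hGm : Monotone G) (hGc : Continuous G)
    (hG0 : ∀ x ≤ (0:ℝ), G x = 0) (hGtop : Tendsto G atTop (nhds 1))
    (U : Ω → ℝ≥0∞) (hU : Measurable U)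
    (hUd : ∀ x : ℝ, 0 ≤ x → P {ω | U ω ≤ ENNReal.ofReal x} = ENNReal.ofReal (G x)) :
    Measure.map U P = Measure.map ENNReal.ofReal (stieltjesOf G hGm hGc).measure := by
  have hprob := stieltjes_prob G hGm hGc hG0 hGtop
  have h1 : IsProbabilityMeasure (Measure.map U P) := Measure.isProbabilityMeasure_map hU.aemeasurable
  have h2 : IsProbabilityMeasure (Measure.map ENNReal.ofReal (stieltjesOf G hGm hGc).measure) :=
    Measure.isProbabilityMeasure_map ENNReal.measurable_ofReal.aemeasurable
  refine Measure.ext_of_Iic _ _ (fun a => ?_)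
  rcases eq_or_ne a ⊤ with rfl | ha
  · rw [Iic_top, measure_univ, measure_univ]
  · have ha0 : 0 ≤ a.toReal := ENNReal.toReal_nonneg
    have haa : ENNReal.ofReal a.toReal = a := ENNReal.ofReal_toReal ha
    rw [Measure.map_apply hU measurableSet_Iic,
      Measure.map_apply ENNReal.measurable_ofReal measurableSet_Iic]
    have hpre : ENNReal.ofReal ⁻¹' (Iic a) = Iic a.toReal := by
      ext r
      simp only [mem_preimage, mem_Iic]
      exact ENNReal.ofReal_le_iff_le_toReal ha
    rw [hpre, stieltjes_Iic G hGm hGc hG0, ← hUd a.toReal ha0]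
    congr 1
    ext ω
    simp [haa]

lemma per_obs {Ω : Type*} [MeasurableSpace Ω] (P : Measure Ω) [IsProbabilityMeasure P]
    (F G : ℝ → ℝ) (p : ℝ) (hp0 : 0 < p) (hp1 : p ≤ 1)
    (hFm : Monotone F) (hFc : Continuous F) (hF0 : ∀ x ≤ (0:ℝ), F x = 0)
    (hFtop : Tendsto F atTop (nhds 1))
    (hGm : Monotone G) (hGc : Continuous G) (hG0 : ∀ x ≤ (0:ℝ), G x = 0)
    (hGtop : Tendsto G atTop (nhds 1))
    (T U : Ω → ℝ≥0∞) (hT : Measurable T) (hU : Measurable U)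
    (hTd : ∀ x : ℝ, 0 ≤ x → P {ω | T ω ≤ ENNReal.ofReal x} = ENNReal.ofReal (p * F x))
    (hUd : ∀ x : ℝ, 0 ≤ x → P {ω | U ω ≤ ENNReal.ofReal x} = ENNReal.ofReal (G x))
    (hTU : IndepFun T U P)
    (t x : ℝ) (ht : 0 ≤ t) (htx : t < x) :
    P {ω | (T ω ≤ U ω → T ω ≤ ENNReal.ofReal t) ∧ min (T ω) (U ω) ≤ ENNReal.ofReal x}
      = ENNReal.ofReal ((∫ z in Set.Ioc t x, (1 - p * F z) ∂(stieltjesOf G hGm hGc).measure)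
          + (1 - (1 - p * F t) * (1 - G t))) := by
  set μG := (stieltjesOf G hGm hGc).measure with hμG
  haveI : IsProbabilityMeasure μG := stieltjes_prob G hGm hGc hG0 hGtop
  set t' := ENNReal.ofReal t with ht'
  set x' := ENNReal.ofReal x with hx'
  -- basic real bounds
  have hpF0 : ∀ z, 0 ≤ p * F z := fun z =>
    mul_nonneg hp0.le (aux_nonneg F hFm hF0 z)
  have hpF1 : ∀ z, p * F z ≤ 1 := fun z =>
    mul_le_one₀ hp1 (aux_nonneg F hFm hF0 z) (aux_le_one F hFm hFtop z)
  have hG0' : ∀ z, 0 ≤ G z := aux_nonneg G hGm hG0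
  have hG1 : ∀ z, G z ≤ 1 := aux_le_one G hGm hGtop
  -- the two pieces
  set E1 : Set Ω := {ω | min (T ω) (U ω) ≤ t'} with hE1
  set E2 : Set Ω := {ω | U ω < T ω ∧ t' < U ω ∧ U ω ≤ x'} with hE2
  have hE1m : MeasurableSet E1 := (hT.min hU) measurableSet_Iic
  have hE2m : MeasurableSet E2 := by
    have h1 : MeasurableSet {ω | U ω < T ω} := measurableSet_lt hU hT
    have h2 : MeasurableSet {ω | t' < U ω ∧ U ω ≤ x'} := hU measurableSet_Ioc
    exact h1.inter h2
  have hsplit : {ω | (T ω ≤ U ω → T ω ≤ t') ∧ min (T ω) (U ω) ≤ x'} = E1 ∪ E2 := by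
    ext ω
    simp only [hE1, hE2, mem_setOf_eq, mem_union]
    constructor
    · rintro ⟨h1, h2⟩
      rcases le_or_gt (T ω) (U ω) with hle | hlt
      · exact Or.inl (min_le_of_left_le (h1 hle))
      · rcases le_or_gt (U ω) t' with h | h
        · exact Or.inl (min_le_of_right_le h)
        · refine Or.inr ⟨hlt, h, ?_⟩
          rwa [min_eq_right hlt.le] at h2
    · rintro (h | ⟨h1, h2, h3⟩)
      · refine ⟨fun hle => ?_, h.trans (ENNReal.ofReal_le_ofReal htx.le)⟩
        rwa [min_eq_left hle] at h
      · refine ⟨fun hle => absurd hle (not_le.mpr h1), ?_⟩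
        rw [min_eq_right h1.le]; exact h3
  have hdisj : Disjoint E1 E2 := by
    rw [Set.disjoint_left]
    rintro ω h1 ⟨hul, hu, _⟩
    rw [hE1, mem_setOf_eq, min_eq_right hul.le] at h1
    exact absurd h1 (not_le.mpr hu)
  -- value of P E1
  have hPE1 : P E1 = ENNReal.ofReal (1 - (1 - p * F t) * (1 - G t)) := by
    have hcompl : E1 = (T ⁻¹' (Ioi t') ∩ U ⁻¹' (Ioi t'))ᶜ := by
      ext ω
      simp only [hE1, mem_setOf_eq, mem_compl_iff, mem_inter_iff, mem_preimage, mem_Ioi,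
        not_and_or, not_lt, min_le_iff]
    have hTIoi : P (T ⁻¹' (Ioi t')) = ENNReal.ofReal (1 - p * F t) := by
      have : T ⁻¹' (Ioi t') = (T ⁻¹' (Iic t'))ᶜ := by
        rw [← Set.preimage_compl, Set.compl_Iic]
      rw [this, prob_compl_eq_one_sub (hT measurableSet_Iic)]
      have : P (T ⁻¹' (Iic t')) = ENNReal.ofReal (p * F t) := hTd t ht
      rw [this, ← ENNReal.ofReal_one, ← ENNReal.ofReal_sub _ (hpF0 t)]
    have hUIoi : P (U ⁻¹' (Ioi t')) = ENNReal.ofReal (1 - G t) := by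
      have : U ⁻¹' (Ioi t') = (U ⁻¹' (Iic t'))ᶜ := by
        rw [← Set.preimage_compl, Set.compl_Iic]
      rw [this, prob_compl_eq_one_sub (hU measurableSet_Iic)]
      have : P (U ⁻¹' (Iic t')) = ENNReal.ofReal (G t) := hUd t ht
      rw [this, ← ENNReal.ofReal_one, ← ENNReal.ofReal_sub _ (hG0' t)]
    have hinter := (indepFun_iff_measure_inter_preimage_eq_mul.mp hTU)
      (Ioi t') (Ioi t') measurableSet_Ioi measurableSet_Ioi
    have hc0 : 0 ≤ (1 - p * F t) * (1 - G t) :=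
      mul_nonneg (by linarith [hpF1 t]) (by linarith [hG1 t])
    rw [hcompl, prob_compl_eq_one_sub ((hT measurableSet_Ioi).inter (hU measurableSet_Ioi)),
      hinter, hTIoi, hUIoi, ← ENNReal.ofReal_mul (by linarith [hpF1 t]),
      ← ENNReal.ofReal_one, ← ENNReal.ofReal_sub _ hc0]
  -- value of P E2
  have hPE2 : P E2 = ENNReal.ofReal (∫ z in Set.Ioc t x, (1 - p * F z) ∂μG) := by
    set μT := Measure.map T P with hμT
    set μU := Measure.map U P with hμU2
    haveI : IsProbabilityMeasure μT := Measure.isProbabilityMeasure_map hT.aemeasurable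
    haveI : IsProbabilityMeasure μU := Measure.isProbabilityMeasure_map hU.aemeasurable
    set S2 : Set (ℝ≥0∞ × ℝ≥0∞) := {q | q.2 < q.1 ∧ q.2 ∈ Ioc t' x'} with hS2
    have hS2m : MeasurableSet S2 :=
      (measurableSet_lt measurable_snd measurable_fst).inter (measurable_snd measurableSet_Ioc)
    have hmap : Measure.map (fun ω => (T ω, U ω)) P = μT.prod μU :=
      (indepFun_iff_map_prod_eq_prod_map_map hT.aemeasurable hU.aemeasurable).mp hTU
    have hpre : E2 = (fun ω => (T ω, U ω)) ⁻¹' S2 := rfl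
    rw [hpre, ← Measure.map_apply (hT.prodMk hU) hS2m, hmap,
      Measure.prod_apply_symm hS2m]
    -- the section of S2 at height b
    have hfun : (fun b => μT ((fun a => (a, b)) ⁻¹' S2))
        = (Ioc t' x').indicator (fun b => μT (Ioi b)) := by
      funext b
      by_cases hb : b ∈ Ioc t' x'
      · rw [indicator_of_mem hb]
        congr 1
        ext a
        simp only [hS2, mem_preimage, mem_setOf_eq, mem_Ioi]
        exact ⟨fun h => h.1, fun h => ⟨h, hb⟩⟩
      · rw [indicator_of_notMem hb]
        have : (fun a => (a, b)) ⁻¹' S2 = ∅ := by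
          ext a
          simp only [hS2, mem_preimage, mem_setOf_eq, mem_empty_iff_false, iff_false]
          exact fun h => hb h.2
        rw [this, measure_empty]
    rw [hfun, lintegral_indicator measurableSet_Ioc]
    -- compute μT (Ioi b) for b in the window
    have hμTIoi : ∀ b ∈ Ioc t' x', μT (Ioi b) = ENNReal.ofReal (1 - p * F b.toReal) := by
      intro b hb
      have hbt : b ≠ ⊤ := (hb.2.trans_lt ENNReal.ofReal_lt_top).ne
      have hb0 : 0 ≤ b.toReal := ENNReal.toReal_nonneg
      have hIic : μT (Iic b) = ENNReal.ofReal (p * F b.toReal) := by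
        rw [hμT, Measure.map_apply hT measurableSet_Iic]
        have : T ⁻¹' (Iic b) = {ω | T ω ≤ ENNReal.ofReal b.toReal} := by
          ext ω; simp [ENNReal.ofReal_toReal hbt]
        rw [this]; exact hTd b.toReal hb0
      have : Ioi b = (Iic b)ᶜ := (Set.compl_Iic ..).symm
      rw [this, prob_compl_eq_one_sub measurableSet_Iic, hIic,
        ← ENNReal.ofReal_one, ← ENNReal.ofReal_sub _ (hpF0 b.toReal)]
    rw [setLIntegral_congr_fun measurableSet_Ioc hμTIoi]
    -- identify μU with the pushforward of μG
    have hlaw : μU = Measure.map ENNReal.ofReal μG :=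
      law_eq_map P G hGm hGc hG0 hGtop U hU hUd
    have hfm : Measurable fun b : ℝ≥0∞ => ENNReal.ofReal (1 - p * F b.toReal) := by
      have : Measurable fun b : ℝ≥0∞ => 1 - p * F b.toReal :=
        measurable_const.sub ((hFc.measurable.comp ENNReal.measurable_toReal).const_mul p)
      exact this.ennreal_ofReal
    rw [hlaw, setLIntegral_map measurableSet_Ioc hfm ENNReal.measurable_ofReal]
    have hpre2 : ENNReal.ofReal ⁻¹' (Ioc t' x') = Ioc t x := by
      ext r
      simp only [mem_preimage, mem_Ioc, ht', hx']
      constructor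
      · rintro ⟨h1, h2⟩
        have hr0 : 0 < r := by
          by_contra h
          push_neg at h
          rw [ENNReal.ofReal_eq_zero.mpr h] at h1
          exact absurd h1 (by simp)
        exact ⟨(ENNReal.ofReal_lt_ofReal_iff hr0).mp h1,
          (ENNReal.ofReal_le_ofReal_iff (ht.trans htx.le)).mp h2⟩
      · rintro ⟨h1, h2⟩
        exact ⟨ENNReal.ofReal_lt_ofReal_iff_of_nonneg ht |>.mpr h1,
          ENNReal.ofReal_le_ofReal h2⟩
    rw [hpre2]
    have hcongr : ∀ r ∈ Ioc t x,
        ENNReal.ofReal (1 - p * F (ENNReal.ofReal r).toReal)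
          = ENNReal.ofReal (1 - p * F r) := by
      intro r hr
      rw [ENNReal.toReal_ofReal (ht.trans hr.1.le)]
    rw [setLIntegral_congr_fun measurableSet_Ioc hcongr]
    have hint : Integrable (fun z => 1 - p * F z) (μG.restrict (Set.Ioc t x)) := by
      refine ⟨(continuous_const.sub (continuous_const.mul hFc)).aestronglyMeasurable, ?_⟩
      apply HasFiniteIntegral.of_bounded (C := 1)
      filter_upwards with z
      rw [Real.norm_eq_abs, abs_le]
      constructor <;> [linarith [hpF1 z]; linarith [hpF0 z]]
    rw [ofReal_integral_eq_lintegral_ofReal hint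
      (ae_of_all _ (fun z => by simp only [Pi.zero_apply]; linarith [hpF1 z]))]
  have hA0 : 0 ≤ ∫ z in Set.Ioc t x, (1 - p * F z) ∂μG :=
    integral_nonneg (fun z => by simp only [Pi.zero_apply]; linarith [hpF1 z])
  have hB0 : 0 ≤ 1 - (1 - p * F t) * (1 - G t) := by
    have h1 : (1 - p * F t) * (1 - G t) ≤ 1 :=
      mul_le_one₀ (by linarith [hpF0 t]) (by linarith [hG1 t]) (by linarith [hG0' t])
    linarith
  rw [hsplit, measure_union hdisj hE2m, hPE1, hPE2, ← ENNReal.ofReal_add hB0 hA0, add_comm]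

/-- for 0 ≤ t < x ≤ τ_H,
P(M_u(n) ≤ t, M(n) ≤ x) = (∫_t^x F̄*(z) dG(z) + H(t))^n. -/
theorem stmt_6
    (F G : ℝ → ℝ) (p : ℝ) (hp0 : 0 < p) (hp1 : p ≤ 1)
    (hFm : Monotone F) (hFc : Continuous F) (hF0 : ∀ x ≤ (0:ℝ), F x = 0)
    (hFtop : Tendsto F atTop (nhds 1))
    (hGm : Monotone G) (hGc : Continuous G) (hG0 : ∀ x ≤ (0:ℝ), G x = 0)
    (hGtop : Tendsto G atTop (nhds 1))
    (μF μG : Measure ℝ)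
    (hμF : μF = (stieltjesOf F hFm hFc).measure)
    (hμG : μG = (stieltjesOf G hGm hGc).measure)
    {Ω : Type*} [MeasurableSpace Ω] (P : Measure Ω) [IsProbabilityMeasure P]
    (n : ℕ) (hn : 0 < n)
    (Tstar U : Fin n → Ω → ℝ≥0∞)
    (hTmeas : ∀ i, Measurable (Tstar i)) (hUmeas : ∀ i, Measurable (U i))
    (hTd : ∀ i, ∀ x : ℝ, 0 ≤ x → P {ω | Tstar i ω ≤ ENNReal.ofReal x} = ENNReal.ofReal (p * F x))
    (hTinf : ∀ i, P {ω | Tstar i ω = ⊤} = ENNReal.ofReal (1 - p))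
    (hUd : ∀ i, ∀ x : ℝ, 0 ≤ x → P {ω | U i ω ≤ ENNReal.ofReal x} = ENNReal.ofReal (G x))
    (hTU : ∀ i, IndepFun (Tstar i) (U i) P)
    (hiid : iIndepFun (fun i ω => (Tstar i ω, U i ω)) P)
    (τH : ℝ) (hτH0 : 0 < τH)
    (hτHlt : ∀ x, 0 ≤ x → x < τH → 0 < (1 - p * F x) * (1 - G x))
    (hτHend : (1 - p * F τH) * (1 - G τH) = 0)
    : ∀ t x : ℝ, 0 ≤ t → t < x → x ≤ τH →
      P {ω | (⨆ i, ⨆ (_ : Tstar i ω ≤ U i ω), Tstar i ω) ≤ ENNReal.ofReal t ∧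
             (⨆ i, min (Tstar i ω) (U i ω)) ≤ ENNReal.ofReal x} =
        ENNReal.ofReal ((∫ z in Set.Ioc t x, (1 - p * F z) ∂μG)
            + (1 - (1 - p * F t) * (1 - G t))) ^ n := by
  intro t x ht htx hxτ
  subst hμG
  set t' := ENNReal.ofReal t with ht'
  set x' := ENNReal.ofReal x with hx'
  set S : Set (ℝ≥0∞ × ℝ≥0∞) :=
    {q | (q.1 ≤ q.2 → q.1 ≤ t') ∧ min q.1 q.2 ≤ x'} with hS
  have hSm : MeasurableSet S := by
    have h1 : S = ({q : ℝ≥0∞ × ℝ≥0∞ | q.1 ≤ q.2}ᶜ ∪ {q | q.1 ≤ t'})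
        ∩ {q | min q.1 q.2 ≤ x'} := by
      ext q
      simp only [hS, mem_setOf_eq, mem_inter_iff, mem_union, mem_compl_iff, mem_setOf_eq]
      tauto
    rw [h1]
    exact (((measurableSet_le measurable_fst measurable_snd).compl).union
      (measurable_fst measurableSet_Iic)).inter
      ((measurable_fst.min measurable_snd) measurableSet_Iic)
  have hev : {ω | (⨆ i, ⨆ (_ : Tstar i ω ≤ U i ω), Tstar i ω) ≤ t' ∧
      (⨆ i, min (Tstar i ω) (U i ω)) ≤ x'}
      = ⋂ i ∈ Finset.univ, (fun ω => (Tstar i ω, U i ω)) ⁻¹' S := by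
    ext ω
    simp only [mem_setOf_eq, mem_iInter, Finset.mem_univ, forall_const, mem_preimage, hS]
    constructor
    · rintro ⟨h1, h2⟩ i
      rw [iSup_le_iff] at h1 h2
      exact ⟨fun hc => iSup_le_iff.mp (h1 i) hc, h2 i⟩
    · intro h
      exact ⟨iSup_le fun i => iSup_le fun hc => (h i).1 hc, iSup_le fun i => (h i).2⟩
  rw [hev, (iIndepFun_iff_measure_inter_preimage_eq_mul.mp hiid) Finset.univ
    (fun _ _ => hSm)]
  have heach : ∀ i : Fin n, P ((fun ω => (Tstar i ω, U i ω)) ⁻¹' S)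
      = ENNReal.ofReal ((∫ z in Set.Ioc t x, (1 - p * F z) ∂(stieltjesOf G hGm hGc).measure)
          + (1 - (1 - p * F t) * (1 - G t))) := by
    intro i
    have := per_obs P F G p hp0 hp1 hFm hFc hF0 hFtop hGm hGc hG0 hGtop
      (Tstar i) (U i) (hTmeas i) (hUmeas i) (hTd i) (hUd i) (hTU i) t x ht htx
    convert this using 2
    rfl
  rw [Finset.prod_congr rfl (fun i _ => heach i), Finset.prod_const, Finset.card_univ,
    Fintype.card_fin]
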